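/- Let H be an n×n Hermitian complex matrix, let β > 0 and t_c ≥ 0, and define K = (4πβ)^{−1/2} · ∫_{−t_c}^{t_c} e^{−t²/(4β)} · exp(−itH) dt (a Bochner integral of matrix-valued functions). Then, in the ℓ²→ℓ² operator norm, ‖exp(−β·H²) − K‖ ≤ e^{−t_c²/(4β)}. -/

import Mathlib

open scoped Matrix.Norms.L2Operator
open MeasureTheory
open scoped Matrix

section AuxLemmas

open Complex Set

private lemma scalar_gauss_aux (β lam : ℝ) (hβ : 0 < β) :
    ∫ t : ℝ, (Real.exp (-t ^ 2 / (4 * β)) : ℂ) * Complex.exp ((-(t : ℂ) * Complex.I) * lam)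
      = (Real.sqrt (4 * Real.pi * β) : ℂ) * Complex.exp (-(β : ℂ) * lam ^ 2) := by
  have hb : (0:ℝ) < (4 * β)⁻¹ := by positivity
  have hβ' : (β:ℂ) ≠ 0 := by exact_mod_cast hβ.ne'
  have h := fourierIntegral_gaussian (b := (((4 * β)⁻¹ : ℝ) : ℂ))
    (by simpa using hb) (-(lam : ℂ))
  have hL : (fun x : ℝ => cexp (I * (-(lam:ℂ)) * x) * cexp (-(((4 * β)⁻¹ : ℝ) : ℂ) * x ^ 2))
      = fun t : ℝ => (Real.exp (-t ^ 2 / (4 * β)) : ℂ)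
          * Complex.exp ((-(t : ℂ) * Complex.I) * lam) := by
    funext x
    rw [← Complex.exp_add, Complex.ofReal_exp, ← Complex.exp_add]
    congr 1
    push_cast
    ring
  rw [hL] at h
  rw [h]
  congr 1
  · rw [show ((Real.pi : ℂ) / (((4 * β)⁻¹ : ℝ) : ℂ)) = (((4 * Real.pi * β : ℝ)) : ℂ) by
      push_cast; field_simp]
    rw [show ((1/2 : ℂ)) = (((1/2 : ℝ) : ℂ)) by norm_num]
    rw [← Complex.ofReal_cpow (by positivity), Real.sqrt_eq_rpow]
  · congr 1
    have h4 : ((4:ℂ) * (((4 * β)⁻¹ : ℝ) : ℂ)) = ((β:ℂ))⁻¹ := by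
      push_cast; field_simp
    rw [h4]
    field_simp

private lemma shift_Ioi_aux (c : ℝ) (f : ℝ → ℝ) :
    ∫ x in Ioi c, f (x - c) = ∫ x in Ioi 0, f x := by
  have A : MeasurableEmbedding fun x : ℝ => x + c :=
    (Homeomorph.addRight c).isClosedEmbedding.measurableEmbedding
  have h := A.setIntegral_map (μ := volume) (g := fun y => f (y - c)) (s := Ioi c)
  rw [map_add_right_eq_self volume c] at h
  rw [h]
  congr 1
  · ext x; simp [preimage_add_const_Ioi]
  · funext x; congr 1; ring

private lemma gauss_tail_aux (β t_c : ℝ) (hβ : 0 < β) (ht : 0 ≤ t_c) :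
    ∫ x in Ioi t_c, Real.exp (-x ^ 2 / (4 * β))
      ≤ Real.exp (-t_c ^ 2 / (4 * β)) * (Real.sqrt (4 * Real.pi * β) / 2) := by
  have hb : (0:ℝ) < (4 * β)⁻¹ := by positivity
  have hint : Integrable (fun x : ℝ => Real.exp (-(4 * β)⁻¹ * x ^ 2)) :=
    integrable_exp_neg_mul_sq hb
  have key : ∫ x in Ioi t_c, Real.exp (-x ^ 2 / (4 * β))
      ≤ ∫ x in Ioi t_c, Real.exp (-t_c ^ 2 / (4 * β)) * Real.exp (-(x - t_c) ^ 2 / (4 * β)) := by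
    apply setIntegral_mono_on
    · have : (fun x : ℝ => Real.exp (-x ^ 2 / (4 * β)))
          = fun x : ℝ => Real.exp (-(4 * β)⁻¹ * x ^ 2) := by
        funext x; congr 1; ring
      rw [this]; exact hint.integrableOn
    · have : (fun x : ℝ => Real.exp (-t_c ^ 2 / (4 * β)) * Real.exp (-(x - t_c) ^ 2 / (4 * β)))
          = fun x : ℝ => Real.exp (-t_c ^ 2 / (4 * β)) * Real.exp (-(4 * β)⁻¹ * (x - t_c) ^ 2) := by
        funext x; congr 2; ring
      rw [this]
      exact ((hint.comp_sub_right t_c).const_mul _).integrableOn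
    · exact measurableSet_Ioi
    · intro x hx
      rw [← Real.exp_add]
      apply Real.exp_le_exp.2
      have hx' : t_c ≤ x := le_of_lt hx
      rw [← add_div, div_le_div_iff_of_pos_right (by positivity)]
      nlinarith
  have hshift : ∫ x in Ioi t_c, Real.exp (-(x - t_c) ^ 2 / (4 * β))
      = ∫ x in Ioi 0, Real.exp (-x ^ 2 / (4 * β)) :=
    shift_Ioi_aux t_c (fun y => Real.exp (-y ^ 2 / (4 * β)))
  have hgauss : ∫ x in Ioi (0:ℝ), Real.exp (-x ^ 2 / (4 * β))
      = Real.sqrt (4 * Real.pi * β) / 2 := by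
    have : (fun x : ℝ => Real.exp (-x ^ 2 / (4 * β)))
        = fun x : ℝ => Real.exp (-(4 * β)⁻¹ * x ^ 2) := by
      funext x; congr 1; ring
    rw [this, integral_gaussian_Ioi]
    congr 2
    field_simp
  calc ∫ x in Ioi t_c, Real.exp (-x ^ 2 / (4 * β))
      ≤ ∫ x in Ioi t_c, Real.exp (-t_c ^ 2 / (4 * β)) * Real.exp (-(x - t_c) ^ 2 / (4 * β)) := key
    _ = Real.exp (-t_c ^ 2 / (4 * β)) * ∫ x in Ioi t_c, Real.exp (-(x - t_c) ^ 2 / (4 * β)) := by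
        rw [MeasureTheory.integral_const_mul]
    _ = Real.exp (-t_c ^ 2 / (4 * β)) * (Real.sqrt (4 * Real.pi * β) / 2) := by
        rw [hshift, hgauss]

private noncomputable def entryCLM_aux {n : ℕ} (i j : Fin n) :
    Matrix (Fin n) (Fin n) ℂ →L[ℂ] ℂ :=
  LinearMap.toContinuousLinearMap
    { toFun := fun M => M i j, map_add' := fun _ _ => rfl, map_smul' := fun _ _ => rfl }

private lemma entry_integral_aux {n : ℕ} (i j : Fin n) (F : ℝ → Matrix (Fin n) (Fin n) ℂ)
    (hF : Integrable F) : (∫ t, F t) i j = ∫ t, F t i j :=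
  (ContinuousLinearMap.integral_comp_comm (entryCLM_aux i j) hF).symm

end AuxLemmas

/-- **Norm closeness of the Gaussian-filter AGSP to `e^{−βH²}` (Proposition 6, step 1).**
For a Hermitian matrix `H`, `β > 0` and `t_c ≥ 0`, the operator
`K = (4πβ)^{−1/2} ∫_{−t_c}^{t_c} e^{−t²/(4β)} e^{−itH} dt` satisfies
`‖e^{−βH²} − K‖ ≤ e^{−t_c²/(4β)}` in the `ℓ² → ℓ²` operator norm. -/
theorem stmt_14 {n : ℕ} (H : Matrix (Fin n) (Fin n) ℂ) (hH : H.IsHermitian)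
    (β : ℝ) (hβ : 0 < β) (t_c : ℝ) (ht : 0 ≤ t_c) :
    ‖NormedSpace.exp ((-(β : ℂ)) • (H * H)) -
        (Real.sqrt (4 * Real.pi * β))⁻¹ •
          ∫ t in (-t_c)..t_c, Real.exp (-t ^ 2 / (4 * β)) •
            NormedSpace.exp ((-(t : ℂ) * Complex.I) • H)‖
      ≤ Real.exp (-t_c ^ 2 / (4 * β)) := by
  classical
  set g : ℝ → ℝ := fun t => Real.exp (-t ^ 2 / (4 * β)) with hgdef
  set U : ℝ → Matrix (Fin n) (Fin n) ℂ :=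
    fun t => NormedSpace.exp ((-(t : ℂ) * Complex.I) • H) with hUdef
  set f : ℝ → Matrix (Fin n) (Fin n) ℂ := fun t => g t • U t with hfdef
  have hb : (0:ℝ) < (4 * β)⁻¹ := by positivity
  have hgint : Integrable (fun t : ℝ => Real.exp (-(4 * β)⁻¹ * t ^ 2)) :=
    integrable_exp_neg_mul_sq hb
  have hgeq : g = fun t => Real.exp (-(4 * β)⁻¹ * t ^ 2) := by
    funext t; simp only [hgdef]; congr 1; ring
  have hgint' : Integrable g := by rw [hgeq]; exact hgint
  have hsqrtpos : 0 < Real.sqrt (4 * Real.pi * β) :=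
    Real.sqrt_pos.2 (by positivity)
  -- spectral data
  set V : Matrix (Fin n) (Fin n) ℂ := (hH.eigenvectorUnitary : Matrix (Fin n) (Fin n) ℂ)
    with hVdef
  set d : Fin n → ℝ := hH.eigenvalues with hddef
  have h1 : H = V * Matrix.diagonal (fun i => (d i : ℂ)) * Vᴴ := by
    conv_lhs => rw [hH.spectral_theorem]
    rfl
  obtain ⟨hV2, hV1⟩ := Unitary.mem_iff.mp hH.eigenvectorUnitary.2
  rw [Matrix.star_eq_conjTranspose] at hV1 hV2
  have hu : IsUnit V := ⟨⟨V, Vᴴ, hV1, hV2⟩, rfl⟩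
  have hinv : V⁻¹ = Vᴴ := Matrix.inv_eq_right_inv hV1
  have hconj : ∀ v : Fin n → ℂ,
      NormedSpace.exp (V * Matrix.diagonal v * Vᴴ)
        = V * Matrix.diagonal (fun i => Complex.exp (v i)) * Vᴴ := by
    intro v
    rw [← hinv, Matrix.exp_conj V _ hu, Matrix.exp_diagonal, hinv]
    congr 2
    funext i
    simp [Pi.exp_def, Complex.exp_eq_exp_ℂ]
  have hsmul : ∀ (a : ℂ) (X : Matrix (Fin n) (Fin n) ℂ),
      a • (V * X * Vᴴ) = V * (a • X) * Vᴴ := by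
    intro a X
    rw [Matrix.mul_smul, Matrix.smul_mul]
  have hdiagsmul : ∀ (a : ℂ) (v : Fin n → ℂ),
      a • Matrix.diagonal v = Matrix.diagonal (fun i => a * v i) := by
    intro a v
    rw [← Matrix.diagonal_smul]
    congr 1
  have hH2 : (-(β:ℂ)) • (H * H)
      = V * Matrix.diagonal (fun i => -(β:ℂ) * ((d i : ℝ) : ℂ) ^ 2) * Vᴴ := by
    have hprod : H * H
        = V * Matrix.diagonal (fun i => ((d i : ℝ) : ℂ) * ((d i : ℝ) : ℂ)) * Vᴴ := by
      conv_lhs => rw [h1]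
      rw [← Matrix.diagonal_mul_diagonal]
      simp only [Matrix.mul_assoc]
      rw [← Matrix.mul_assoc Vᴴ V, hV2, Matrix.one_mul]
    have hsq : (fun i => -(β:ℂ) * (((d i : ℝ) : ℂ) * ((d i : ℝ) : ℂ)))
        = fun i => -(β:ℂ) * ((d i : ℝ) : ℂ) ^ 2 := by
      funext i; ring
    rw [hprod, hsmul, hdiagsmul, hsq]
  have hUdiag : ∀ t : ℝ, U t
      = V * Matrix.diagonal
          (fun k => Complex.exp ((-(t:ℂ) * Complex.I) * ((d k : ℝ) : ℂ))) * Vᴴ := by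
    intro t
    have hsm : (-(t:ℂ) * Complex.I) • H
        = V * Matrix.diagonal (fun k => (-(t:ℂ) * Complex.I) * ((d k : ℝ) : ℂ)) * Vᴴ := by
      conv_lhs => rw [h1]
      rw [hsmul, hdiagsmul]
    rw [show U t = NormedSpace.exp ((-(t:ℂ) * Complex.I) • H) from rfl, hsm, hconj]
  have hexp2 : NormedSpace.exp ((-(β:ℂ)) • (H * H))
      = V * Matrix.diagonal (fun k => Complex.exp (-(β:ℂ) * ((d k : ℝ) : ℂ) ^ 2)) * Vᴴ := by
    rw [hH2, hconj]
  have hVDV : ∀ (w : Fin n → ℂ) (i j : Fin n),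
      (V * Matrix.diagonal w * Vᴴ) i j = ∑ k, V i k * w k * star (V j k) := by
    intro w i j
    rw [Matrix.mul_apply]
    refine Finset.sum_congr rfl fun k _ => ?_
    rw [Matrix.mul_diagonal, Matrix.conjTranspose_apply]
  have hUnorm : ∀ t : ℝ, ‖U t‖ ≤ 1 := by
    intro t
    have hA : ((-(t:ℂ) * Complex.I) • H)ᴴ = -((-(t:ℂ) * Complex.I) • H) := by
      rw [Matrix.conjTranspose_smul, hH.eq, ← neg_smul]
      congr 1
      simp [Complex.ext_iff]
    have h2 : (U t)ᴴ * U t = 1 := by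
      rw [show U t = NormedSpace.exp ((-(t:ℂ) * Complex.I) • H) from rfl,
        ← Matrix.exp_conjTranspose, hA,
        ← Matrix.exp_add_of_commute _ _ (Commute.refl ((-(t:ℂ) * Complex.I) • H)).neg_left,
        neg_add_cancel, NormedSpace.exp_zero]
    have h3 := Matrix.l2_opNorm_conjTranspose_mul_self (U t)
    rw [h2] at h3
    have h4 := Matrix.l2_opNorm_conjTranspose_mul_self (1 : Matrix (Fin n) (Fin n) ℂ)
    rw [Matrix.conjTranspose_one, Matrix.one_mul] at h4
    by_contra hgt
    push_neg at hgt
    have h5 : (1:ℝ) < ‖U t‖ * ‖U t‖ := by nlinarith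
    rw [← h3] at h5
    nlinarith
  have hUcont : Continuous U := by
    letI : NormedAlgebra ℚ (Matrix (Fin n) (Fin n) ℂ) := NormedAlgebra.restrictScalars ℚ ℂ _
    exact NormedSpace.exp_continuous.comp
      ((Complex.continuous_ofReal.neg.mul continuous_const).smul continuous_const)
  have hgcont : Continuous g := by
    rw [hgeq]
    exact Real.continuous_exp.comp (continuous_const.mul (continuous_pow 2))
  have hfcont : Continuous f := hgcont.smul hUcont
  have hfnorm : ∀ t : ℝ, ‖f t‖ ≤ g t := by
    intro t
    rw [show f t = g t • U t from rfl, norm_smul]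
    calc ‖g t‖ * ‖U t‖ ≤ ‖g t‖ * 1 :=
          mul_le_mul_of_nonneg_left (hUnorm t) (norm_nonneg _)
      _ = g t := by
          rw [mul_one, Real.norm_eq_abs, abs_of_pos (Real.exp_pos _)]
  have hf_int : Integrable f := by
    refine hgint.mono' hfcont.aestronglyMeasurable ?_
    refine Filter.Eventually.of_forall fun t => ?_
    exact (hfnorm t).trans_eq (congrFun hgeq t)
  have hterm : ∀ lam : ℝ, Integrable
      (fun t : ℝ => ((g t : ℝ) : ℂ) * Complex.exp ((-(t:ℂ) * Complex.I) * (lam : ℂ))) := by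
    intro lam
    refine hgint.mono' ?_ (Filter.Eventually.of_forall fun t => ?_)
    · exact ((Complex.continuous_ofReal.comp hgcont).mul
        (Complex.continuous_exp.comp
          ((Complex.continuous_ofReal.neg.mul continuous_const).mul
            continuous_const))).aestronglyMeasurable
    · have hre : ((-(t:ℂ) * Complex.I) * (lam : ℂ)).re = 0 := by simp
      rw [norm_mul, Complex.norm_real, Real.norm_eq_abs,
        Complex.norm_exp, hre, Real.exp_zero, mul_one, abs_of_pos (Real.exp_pos _)]
      exact le_of_eq (congrFun hgeq t)
  -- the key matrix identity
  have hmain : NormedSpace.exp ((-(β:ℂ)) • (H * H))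
      = (Real.sqrt (4 * Real.pi * β))⁻¹ • ∫ t : ℝ, f t := by
    apply Matrix.ext
    intro i j
    rw [Matrix.smul_apply, entry_integral_aux i j f hf_int, hexp2, hVDV]
    have hentry : ∀ t : ℝ, f t i j
        = ∑ k, (V i k * star (V j k)) *
            (((g t : ℝ) : ℂ) * Complex.exp ((-(t:ℂ) * Complex.I) * ((d k : ℝ) : ℂ))) := by
      intro t
      rw [show f t i j = g t • U t i j from rfl, hUdiag t, hVDV, Finset.smul_sum]
      refine Finset.sum_congr rfl fun k _ => ?_
      rw [Complex.real_smul]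
      ring
    have hcalc : ∫ t : ℝ, f t i j
        = ∑ k, (V i k * star (V j k)) *
            ((Real.sqrt (4 * Real.pi * β) : ℂ)
              * Complex.exp (-(β:ℂ) * ((d k : ℝ) : ℂ) ^ 2)) := by
      rw [show (fun t : ℝ => f t i j)
          = fun t => ∑ k, (V i k * star (V j k)) *
              (((g t : ℝ) : ℂ) * Complex.exp ((-(t:ℂ) * Complex.I) * ((d k : ℝ) : ℂ)))
          from funext hentry]
      rw [MeasureTheory.integral_finset_sum _ fun k _ => (hterm (d k)).const_mul _]
      refine Finset.sum_congr rfl fun k _ => ?_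
      rw [MeasureTheory.integral_const_mul]
      congr 1
      have := scalar_gauss_aux β (d k) hβ
      simpa [hgdef] using this
    rw [hcalc, Finset.smul_sum]
    refine Finset.sum_congr rfl fun k _ => ?_
    rw [Complex.real_smul, Complex.ofReal_inv]
    have hs : (Real.sqrt (4 * Real.pi * β) : ℂ) ≠ 0 := by
      exact_mod_cast hsqrtpos.ne'
    have hcancel : ((Real.sqrt (4 * Real.pi * β) : ℝ) : ℂ)⁻¹
        * ((Real.sqrt (4 * Real.pi * β) : ℝ) : ℂ) = 1 := inv_mul_cancel₀ hs
    linear_combination (-(V i k) * star (V j k)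
      * Complex.exp (-(β:ℂ) * ((d k : ℝ) : ℂ) ^ 2)) * hcancel
  -- splitting the integral
  have hle : -t_c ≤ t_c := by linarith
  have hS : MeasurableSet (Set.Ioc (-t_c) t_c) := measurableSet_Ioc
  have hsplit : ((∫ t in Set.Ioc (-t_c) t_c, f t) + ∫ t in (Set.Ioc (-t_c) t_c)ᶜ, f t)
      = ∫ t, f t := integral_add_compl hS hf_int
  have hinterval : ∫ t in (-t_c)..t_c, f t = ∫ t in Set.Ioc (-t_c) t_c, f t :=
    intervalIntegral.integral_of_le hle
  have hdiff : ((∫ t, f t) - ∫ t in Set.Ioc (-t_c) t_c, f t)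
      = ∫ t in (Set.Ioc (-t_c) t_c)ᶜ, f t := by
    rw [← hsplit]; abel
  rw [hmain, hinterval, ← smul_sub, hdiff,
    norm_smul, Real.norm_eq_abs, abs_of_nonneg (inv_nonneg.2 hsqrtpos.le)]
  have hnorm : ‖∫ t in (Set.Ioc (-t_c) t_c)ᶜ, f t‖
      ≤ ∫ t in (Set.Ioc (-t_c) t_c)ᶜ, g t := by
    apply norm_integral_le_of_norm_le hgint'.integrableOn
    exact Filter.Eventually.of_forall fun t => hfnorm t
  have hcomplset : (Set.Ioc (-t_c) t_c)ᶜ = Set.Iic (-t_c) ∪ Set.Ioi t_c := by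
    ext x
    simp only [Set.mem_compl_iff, Set.mem_Ioc, Set.mem_union, Set.mem_Iic, Set.mem_Ioi,
      not_and_or, not_lt, not_le]
  have hsplit2 : ∫ t in (Set.Ioc (-t_c) t_c)ᶜ, g t
      = (∫ t in Set.Iic (-t_c), g t) + ∫ t in Set.Ioi t_c, g t := by
    rw [hcomplset]
    exact setIntegral_union (Set.Iic_disjoint_Ioi hle) measurableSet_Ioi
      hgint'.integrableOn hgint'.integrableOn
  have hrefl : ∫ t in Set.Iic (-t_c), g t = ∫ t in Set.Ioi t_c, g t := by
    have heven : ∀ x : ℝ, g x = g (-x) := by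
      intro x
      simp only [hgdef]
      rw [neg_sq]
    calc ∫ t in Set.Iic (-t_c), g t = ∫ t in Set.Iic (-t_c), g (-t) :=
          MeasureTheory.integral_congr_ae (Filter.Eventually.of_forall fun t => heven t)
      _ = ∫ t in Set.Ioi t_c, g t := by
          simpa using integral_comp_neg_Iic (-t_c) g
  have h2tail : ((∫ t in Set.Iic (-t_c), g t) + ∫ t in Set.Ioi t_c, g t)
      ≤ Real.exp (-t_c ^ 2 / (4 * β)) * Real.sqrt (4 * Real.pi * β) := by
    rw [hrefl]
    have htail := gauss_tail_aux β t_c hβ ht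
    simp only [hgdef]
    linarith
  calc (Real.sqrt (4 * Real.pi * β))⁻¹ * ‖∫ t in (Set.Ioc (-t_c) t_c)ᶜ, f t‖
      ≤ (Real.sqrt (4 * Real.pi * β))⁻¹
          * (Real.exp (-t_c ^ 2 / (4 * β)) * Real.sqrt (4 * Real.pi * β)) :=
        mul_le_mul_of_nonneg_left ((hnorm.trans_eq hsplit2).trans h2tail)
          (inv_nonneg.2 hsqrtpos.le)
    _ = Real.exp (-t_c ^ 2 / (4 * β)) := by
        rw [mul_comm (Real.exp _), ← mul_assoc, inv_mul_cancel₀ hsqrtpos.ne', one_mul]
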